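/- Let V₂ = {(z,z') ∈ S¹×S¹ : Im z ≠ Im z'} be the set of pairs of points of the circle not at the same horizontal level. Then V₂ is a symmetric open subset of S¹×S¹ and admits a symmetric motion planning rule. -/

import Mathlib

open unitInterval

/-- A subset of `S¹ × S¹` is symmetric if `(x, y) ∈ V` implies `(y, x) ∈ V`. -/
def IsSymmetricSet (V : Set (Circle × Circle)) : Prop :=
  ∀ x y : Circle, (x, y) ∈ V → (y, x) ∈ V

/-- `s` is a symmetric motion planning rule on `V ⊆ S¹ × S¹`: a continuous map from `V`
to the path space `C(I, S¹) = PS¹` (carrying the compact-open topology), sending each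
`(x, y) ∈ V` to a path from `x` to `y`, such that `s (y, x)` is the time-reversal of
`s (x, y)`. -/
def IsSymmetricMPR (V : Set (Circle × Circle)) (s : V → C(unitInterval, Circle)) : Prop :=
  Continuous s ∧
  (∀ p : V, s p 0 = p.1.1 ∧ s p 1 = p.1.2) ∧
  (∀ (x y : Circle) (hxy : (x, y) ∈ V) (hyx : (y, x) ∈ V) (t : unitInterval),
    s ⟨(y, x), hyx⟩ t = s ⟨(x, y), hxy⟩ (σ t))

/-- Angle-lift of `z`, continuous away from `i`. -/
noncomputable def mpA (z : Circle) : ℝ :=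
  Complex.arg ((Circle.exp (Real.pi / 2) * z : Circle) : ℂ) - Real.pi / 2

/-- Angle-lift of `z`, continuous away from `-i`. -/
noncomputable def mpB (z : Circle) : ℝ :=
  Complex.arg ((Circle.exp (-(Real.pi / 2)) * z : Circle) : ℂ) + Real.pi / 2

lemma circle_exp_mpA (z : Circle) : Circle.exp (mpA z) = z := by
  rw [mpA, Circle.exp_sub, Circle.exp_arg]
  field_simp
  simp

lemma circle_exp_mpB (z : Circle) : Circle.exp (mpB z) = z := by
  rw [mpB, Circle.exp_add, Circle.exp_arg, mul_comm, ← mul_assoc, ← Circle.exp_add]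
  simp

lemma coe_exp_pi_div_two : ((Circle.exp (Real.pi / 2) : Circle) : ℂ) = Complex.I := by
  rw [Circle.coe_exp, Complex.exp_mul_I]
  simp [Complex.ext_iff]

lemma coe_exp_neg_pi_div_two :
    ((Circle.exp (-(Real.pi / 2)) : Circle) : ℂ) = -Complex.I := by
  rw [Circle.coe_exp, Complex.exp_mul_I]
  simp [Complex.ext_iff]

lemma sq_re_add_sq_im (z : Circle) : (z : ℂ).re ^ 2 + (z : ℂ).im ^ 2 = 1 := by
  have := Circle.normSq_coe z
  rw [Complex.normSq_apply] at this
  nlinarith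

lemma im_le_one (z : Circle) : (z : ℂ).im ≤ 1 := by nlinarith [sq_re_add_sq_im z]

lemma neg_one_le_im (z : Circle) : -1 ≤ (z : ℂ).im := by nlinarith [sq_re_add_sq_im z]

lemma im_eq_pm_one {z : Circle} (hre : (z : ℂ).re = 0) :
    (z : ℂ).im = -1 ∨ (z : ℂ).im = 1 := by
  have h2 := sq_re_add_sq_im z
  rw [hre] at h2
  have h3 : ((z : ℂ).im - 1) * ((z : ℂ).im + 1) = 0 := by nlinarith
  rcases mul_eq_zero.1 h3 with h | h
  · right; linarith
  · left; linarith

lemma continuousAt_mpA {z : Circle} (h : (z : ℂ).im < 1) : ContinuousAt mpA z := by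
  have hmem : ((Circle.exp (Real.pi / 2) * z : Circle) : ℂ) ∈ Complex.slitPlane := by
    rw [Complex.mem_slitPlane_iff, Circle.coe_mul, coe_exp_pi_div_two]
    simp only [Complex.mul_re, Complex.mul_im, Complex.I_re, Complex.I_im]
    by_cases hre : (z : ℂ).re = 0
    · rcases im_eq_pm_one hre with h1 | h1
      · left; rw [h1]; norm_num
      · exact absurd h1 (ne_of_lt h)
    · right
      simpa using hre
  have harg : ContinuousAt Complex.arg ((Circle.exp (Real.pi / 2) * z : Circle) : ℂ) :=
    Complex.continuousAt_arg hmem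
  have hc : ContinuousAt (fun w : Circle =>
      ((Circle.exp (Real.pi / 2) * w : Circle) : ℂ)) z := by fun_prop
  have hcomp : ContinuousAt (fun w : Circle =>
      Complex.arg ((Circle.exp (Real.pi / 2) * w : Circle) : ℂ)) z := ContinuousAt.comp' (f := fun w : Circle =>
      ((Circle.exp (Real.pi / 2) * w : Circle) : ℂ)) harg hc
  exact hcomp.sub continuousAt_const

lemma continuousAt_mpB {z : Circle} (h : -1 < (z : ℂ).im) : ContinuousAt mpB z := by
  have hmem : ((Circle.exp (-(Real.pi / 2)) * z : Circle) : ℂ) ∈ Complex.slitPlane := by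
    rw [Complex.mem_slitPlane_iff, Circle.coe_mul, coe_exp_neg_pi_div_two]
    simp only [Complex.mul_re, Complex.mul_im, Complex.neg_re, Complex.neg_im,
      Complex.I_re, Complex.I_im]
    by_cases hre : (z : ℂ).re = 0
    · rcases im_eq_pm_one hre with h1 | h1
      · exact absurd h1.symm (ne_of_lt h)
      · left; rw [h1]; norm_num
    · right
      simpa using hre
  have harg : ContinuousAt Complex.arg
      ((Circle.exp (-(Real.pi / 2)) * z : Circle) : ℂ) := Complex.continuousAt_arg hmem
  have hc : ContinuousAt (fun w : Circle =>
      ((Circle.exp (-(Real.pi / 2)) * w : Circle) : ℂ)) z := by fun_prop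
  have hcomp : ContinuousAt (fun w : Circle =>
      Complex.arg ((Circle.exp (-(Real.pi / 2)) * w : Circle) : ℂ)) z := ContinuousAt.comp' (f := fun w : Circle =>
      ((Circle.exp (-(Real.pi / 2)) * w : Circle) : ℂ)) harg hc
  exact hcomp.add continuousAt_const

/-- The set `V₂` of pairs of points of the circle not at the same horizontal level
(distinct imaginary parts) is symmetric and open, and admits a symmetric motion
planning rule. -/
theorem distinct_im_symmetric_mpr :
    IsOpen {p : Circle × Circle | (p.1 : ℂ).im ≠ (p.2 : ℂ).im} ∧
    IsSymmetricSet {p : Circle × Circle | (p.1 : ℂ).im ≠ (p.2 : ℂ).im} ∧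
    ∃ s : {p : Circle × Circle | (p.1 : ℂ).im ≠ (p.2 : ℂ).im} → C(unitInterval, Circle),
      IsSymmetricMPR {p : Circle × Circle | (p.1 : ℂ).im ≠ (p.2 : ℂ).im} s := by
  set V : Set (Circle × Circle) := {p : Circle × Circle | (p.1 : ℂ).im ≠ (p.2 : ℂ).im}
  have hopen : IsOpen V := by
    have : IsClosed {p : Circle × Circle | (p.1 : ℂ).im = (p.2 : ℂ).im} :=
      isClosed_eq (by fun_prop) (by fun_prop)
    exact this.isOpen_compl
  refine ⟨hopen, fun x y h => Ne.symm h, ?_⟩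
  classical
  set S : Set (↥V × unitInterval) :=
    {q | ((q.1.1.1 : Circle) : ℂ).im < ((q.1.1.2 : Circle) : ℂ).im} with hS
  have hSopen : IsOpen S :=
    isOpen_lt (f := fun q : ↥V × unitInterval => ((q.1.1.1 : Circle) : ℂ).im)
      (g := fun q => ((q.1.1.2 : Circle) : ℂ).im) (by fun_prop) (by fun_prop)
  have hSclosed : IsClosed S := by
    have hEq : S = {q : ↥V × unitInterval |
        ((q.1.1.1 : Circle) : ℂ).im ≤ ((q.1.1.2 : Circle) : ℂ).im} := by
      ext q
      simp only [hS, Set.mem_setOf_eq]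
      exact ⟨fun h => le_of_lt h, fun h => lt_of_le_of_ne h q.1.2⟩
    rw [hEq]
    exact isClosed_le (by fun_prop) (by fun_prop)
  set f : ↥V × unitInterval → Circle := fun q =>
    Circle.exp ((1 - (q.2 : ℝ)) * mpA q.1.1.1 + (q.2 : ℝ) * mpB q.1.1.2) with hf
  set g : ↥V × unitInterval → Circle := fun q =>
    Circle.exp ((q.2 : ℝ) * mpA q.1.1.2 + (1 - (q.2 : ℝ)) * mpB q.1.1.1) with hg
  have hx1 : Continuous (fun q : ↥V × unitInterval => (q.1.1.1 : Circle)) := by fun_prop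
  have hx2 : Continuous (fun q : ↥V × unitInterval => (q.1.1.2 : Circle)) := by fun_prop
  have ht : Continuous (fun q : ↥V × unitInterval => (q.2 : ℝ)) := by fun_prop
  have hfS : ContinuousOn f (closure S) := by
    rw [hSclosed.closure_eq]
    intro q hq
    apply ContinuousAt.continuousWithinAt
    have h1 : ((q.1.1.1 : Circle) : ℂ).im < 1 := lt_of_lt_of_le hq (im_le_one _)
    have h2 : -1 < ((q.1.1.2 : Circle) : ℂ).im := lt_of_le_of_lt (neg_one_le_im _) hq
    have hA : ContinuousAt (fun q : ↥V × unitInterval => mpA q.1.1.1) q :=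
      ContinuousAt.comp' (f := fun q : ↥V × unitInterval => q.1.1.1)
        (continuousAt_mpA h1) hx1.continuousAt
    have hB : ContinuousAt (fun q : ↥V × unitInterval => mpB q.1.1.2) q :=
      ContinuousAt.comp' (f := fun q : ↥V × unitInterval => q.1.1.2)
        (continuousAt_mpB h2) hx2.continuousAt
    have hin : ContinuousAt (fun q : ↥V × unitInterval =>
        (1 - (q.2 : ℝ)) * mpA q.1.1.1 + (q.2 : ℝ) * mpB q.1.1.2) q :=
      ((continuousAt_const.sub ht.continuousAt).mul hA).add (ht.continuousAt.mul hB)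
    exact Circle.exp.continuous.continuousAt.comp' hin
  have hgS : ContinuousOn g (closure Sᶜ) := by
    rw [hSopen.isClosed_compl.closure_eq]
    intro q hq
    apply ContinuousAt.continuousWithinAt
    have hlt : ((q.1.1.2 : Circle) : ℂ).im < ((q.1.1.1 : Circle) : ℂ).im := by
      rcases lt_or_gt_of_ne q.1.2 with h | h
      · exact absurd h hq
      · exact h
    have h1 : ((q.1.1.2 : Circle) : ℂ).im < 1 := lt_of_lt_of_le hlt (im_le_one _)
    have h2 : -1 < ((q.1.1.1 : Circle) : ℂ).im := lt_of_le_of_lt (neg_one_le_im _) hlt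
    have hA : ContinuousAt (fun q : ↥V × unitInterval => mpA q.1.1.2) q :=
      ContinuousAt.comp' (f := fun q : ↥V × unitInterval => q.1.1.2)
        (continuousAt_mpA h1) hx2.continuousAt
    have hB : ContinuousAt (fun q : ↥V × unitInterval => mpB q.1.1.1) q :=
      ContinuousAt.comp' (f := fun q : ↥V × unitInterval => q.1.1.1)
        (continuousAt_mpB h2) hx1.continuousAt
    have hin : ContinuousAt (fun q : ↥V × unitInterval =>
        (q.2 : ℝ) * mpA q.1.1.2 + (1 - (q.2 : ℝ)) * mpB q.1.1.1) q :=
      (ht.continuousAt.mul hA).add ((continuousAt_const.sub ht.continuousAt).mul hB)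
    exact Circle.exp.continuous.continuousAt.comp' hin
  have hfront : ∀ a ∈ frontier S, f a = g a := by
    intro a ha
    rw [(IsClopen.frontier_eq ⟨hSclosed, hSopen⟩ : frontier S = ∅)] at ha
    exact absurd ha (Set.notMem_empty a)
  have hFc : Continuous (S.piecewise f g) := continuous_piecewise hfront hfS hgS
  set F : C(↥V × unitInterval, Circle) := ⟨S.piecewise f g, hFc⟩ with hF
  refine ⟨fun v => F.curry v, F.curry.continuous, ?_, ?_⟩
  · intro p
    constructor
    · show F (p, 0) = p.1.1
      by_cases hp : (p, (0 : unitInterval)) ∈ S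
      · rw [show F (p, 0) = f (p, 0) from Set.piecewise_eq_of_mem S f g hp]
        simp [hf, circle_exp_mpA]
      · rw [show F (p, 0) = g (p, 0) from Set.piecewise_eq_of_notMem S f g hp]
        simp [hg, circle_exp_mpB]
    · show F (p, 1) = p.1.2
      by_cases hp : (p, (1 : unitInterval)) ∈ S
      · rw [show F (p, 1) = f (p, 1) from Set.piecewise_eq_of_mem S f g hp]
        simp [hf, circle_exp_mpB]
      · rw [show F (p, 1) = g (p, 1) from Set.piecewise_eq_of_notMem S f g hp]
        simp [hg, circle_exp_mpA]
  · intro x y hxy hyx t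
    show F (⟨(y, x), hyx⟩, t) = F (⟨(x, y), hxy⟩, σ t)
    rcases lt_or_gt_of_ne hxy with hlt | hlt
    · have h1 : ((⟨(y, x), hyx⟩ : ↥V), t) ∉ S := not_lt.2 (le_of_lt hlt)
      have h2 : ((⟨(x, y), hxy⟩ : ↥V), σ t) ∈ S := hlt
      show S.piecewise f g _ = S.piecewise f g _
      rw [Set.piecewise_eq_of_notMem S f g h1, Set.piecewise_eq_of_mem S f g h2]
      simp only [hf, hg, coe_symm_eq]
      congr 1
      ring
    · have h1 : ((⟨(y, x), hyx⟩ : ↥V), t) ∈ S := hlt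
      have h2 : ((⟨(x, y), hxy⟩ : ↥V), σ t) ∉ S := not_lt.2 (le_of_lt hlt)
      show S.piecewise f g _ = S.piecewise f g _
      rw [Set.piecewise_eq_of_mem S f g h1, Set.piecewise_eq_of_notMem S f g h2]
      simp only [hf, hg, coe_symm_eq]
      congr 1
      ring
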